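/- arXiv:2511.01292 — 3 statements merged into one kernel-verified Lean document; each statement's English description precedes it below -/
import Mathlib

section
/- Fix l ≥ 1, z ∈ ℝ^l and τ > 0, and let z̄ := (1/l)∑_{j=1}^l z_j. Then for every i, linearized_softmax(z/τ)_i − 1/l = (z_i − z̄)/(lτ). Consequently, the empirical variance of the components of linearized_softmax(z/τ), namely (1/l)∑_{i=1}^l (linearized_softmax(z/τ)_i − 1/l)², equals 1/(l²τ²) times the empirical variance (1/l)∑_{i=1}^l (z_i − z̄)² of the components of z; in particular it is inversely proportional to τ². -/
/-- The linearized softmax on `ℝ^l`: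
`linearizedSoftmax l z = (1/l − (1/l²)·∑ j, z j) • 𝟙 + (1/l) • z`,
the first-order Taylor expansion of softmax at the origin. -/
noncomputable def linearizedSoftmax (l : ℕ) (z : Fin l → ℝ) : Fin l → ℝ :=
  fun i => (1 / (l : ℝ) - (1 / (l : ℝ) ^ 2) * ∑ j, z j) + (1 / (l : ℝ)) * z i

/-- For `τ > 0`, with `z̄` the mean of the entries of `z`:
`linearizedSoftmax (z/τ)_i − 1/l = (z_i − z̄)/(lτ)` for every `i`, and consequently the
empirical variance of the entries of `linearizedSoftmax (z/τ)` equals `1/(l²τ²)` times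
the empirical variance of the entries of `z`. -/
theorem linearizedSoftmax_temperature_variance (l : ℕ) (hl : 1 ≤ l) (z : Fin l → ℝ)
    (τ : ℝ) (hτ : 0 < τ) (zbar : ℝ) (hzbar : zbar = (1 / (l : ℝ)) * ∑ j, z j) :
    (∀ i, linearizedSoftmax l (fun j => z j / τ) i - 1 / (l : ℝ)
        = (z i - zbar) / ((l : ℝ) * τ)) ∧
    (1 / (l : ℝ)) * ∑ i, (linearizedSoftmax l (fun j => z j / τ) i - 1 / (l : ℝ)) ^ 2
      = (1 / ((l : ℝ) ^ 2 * τ ^ 2)) * ((1 / (l : ℝ)) * ∑ i, (z i - zbar) ^ 2) := by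
  have hl0 : (l : ℝ) ≠ 0 := by positivity
  have hτ0 : τ ≠ 0 := ne_of_gt hτ
  have key : ∀ i, linearizedSoftmax l (fun j => z j / τ) i - 1 / (l : ℝ)
      = (z i - zbar) / ((l : ℝ) * τ) := by
    intro i
    simp only [linearizedSoftmax, hzbar]
    rw [show (∑ x : Fin l, z x / τ) = (∑ x : Fin l, z x) / τ from (Finset.sum_div _ _ _).symm]
    field_simp
    ring
  refine ⟨key, ?_⟩
  have : ∀ i : Fin l, (linearizedSoftmax l (fun j => z j / τ) i - 1 / (l : ℝ)) ^ 2
      = (1 / ((l : ℝ) ^ 2 * τ ^ 2)) * (z i - zbar) ^ 2 := by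
    intro i
    rw [key i, div_pow, mul_pow]
    field_simp
  rw [Finset.sum_congr rfl fun i _ => this i, ← Finset.mul_sum]
  ring
end

section
/- Let d, l ≥ 1, x₁, …, x_l ∈ ℝ^d, y₁, …, y_{l−1} ∈ ℝ, and let Z ∈ ℝ^{(d+1)×l} be the matrix whose i-th column is (x_i, y_i) for i ≤ l−1 and whose l-th column is (x_l, 0). Let M ∈ ℝ^{(d+1)×(d+1)} have upper-left d×d block M₁₁ and lower-left 1×d block m₂₁ᵀ, let V ∈ ℝ^{(d+1)×(d+1)} have last row (v₂₁ᵀ, v₂₂) with v₂₁ ∈ ℝ^d and v₂₂ ∈ ℝ, and let τ > 0. Define the linearized-attention output E := Z + (1/l)·V Z·( (1/τ)·ZᵀMZ + 𝟙𝟙ᵀ − (1/(lτ))·𝟙·(𝟙ᵀ ZᵀMZ) ), where 𝟙 ∈ ℝ^l is the all-ones vector. Then the prediction entry satisfies exactly: E_{d+1,l} = (1/τ)·ŵᵀ x_l + v₂₁ᵀ s_x + v₂₂ s_y, where ŵ := M₁₁ᵀ(C_xx v₂₁ + v₂₂ C_xy) + (v₂₁ᵀ C_xy + v₂₂ C_yy)·m₂₁.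 -/
open Matrix

lemma myDotSum {m n : Type*} [Fintype m] [Fintype n] (v : n → ℝ) (f : m → n → ℝ) :
    ∑ i, v ⬝ᵥ f i = v ⬝ᵥ ∑ i, f i := by
  simp only [dotProduct, Finset.sum_apply, Finset.mul_sum]
  exact Finset.sum_comm

lemma mySumDot {m n : Type*} [Fintype m] [Fintype n] (v : n → ℝ) (f : m → n → ℝ) :
    ∑ i, f i ⬝ᵥ v = (∑ i, f i) ⬝ᵥ v := by
  simp only [dotProduct, Finset.sum_apply, Finset.sum_mul]
  exact Finset.sum_comm

lemma myMulVecSum {m n k : Type*} [Fintype m] [Fintype n] [Fintype k]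
    (A : Matrix m n ℝ) (f : k → n → ℝ) :
    ∑ i, A *ᵥ f i = A *ᵥ ∑ i, f i := by
  funext a
  simp only [Finset.sum_apply, Matrix.mulVec, dotProduct, Finset.sum_apply, Finset.mul_sum]
  exact Finset.sum_comm

lemma myVecMulVecMulVec {n : Type*} [Fintype n] (u v w : n → ℝ) :
    vecMulVec u v *ᵥ w = (v ⬝ᵥ w) • u := by
  funext a
  simp only [Matrix.mulVec, dotProduct, vecMulVec_apply, Pi.smul_apply, smul_eq_mul]
  rw [Finset.sum_congr rfl (fun b _ => mul_assoc (u a) (v b) (w b)), ← Finset.mul_sum]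
  ring

lemma mySumMulVec {m n k : Type*} [Fintype m] [Fintype n] [Fintype k]
    (A : k → Matrix m n ℝ) (v : n → ℝ) :
    ∑ i, A i *ᵥ v = (∑ i, A i) *ᵥ v := by
  funext a
  simp only [Finset.sum_apply, Matrix.mulVec, dotProduct, Matrix.sum_apply, Finset.sum_mul]
  exact Finset.sum_comm


/-- Exact expanded form of the linearized-attention prediction: for the embedding
matrix `Z` whose `i`-th column is `(xᵢ, yᵢ)` (with `y = 0` in the last column), and the
linearized-attention output
`E := Z + (1/l)·V Z ((1/τ)·ZᵀMZ + 𝟙𝟙ᵀ − (1/(lτ))·𝟙(𝟙ᵀ ZᵀMZ))`,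
the prediction entry satisfies
`E_{d+1,l} = (1/τ)·ŵᵀ x_l + v₂₁ᵀ s_x + v₂₂ s_y` with
`ŵ = M₁₁ᵀ(C_xx v₂₁ + v₂₂ C_xy) + (v₂₁ᵀ C_xy + v₂₂ C_yy)·m₂₁`. -/
theorem linearized_attention_prediction (d l : ℕ) (hd : 1 ≤ d) (hl : 1 ≤ l)
    (x : Fin l → Fin d → ℝ) (y : Fin l → ℝ)
    (lastCol : Fin l) (hlastCol : (lastCol : ℕ) = l - 1)
    (hy : y lastCol = 0)
    (M11 : Matrix (Fin d) (Fin d) ℝ) (m21 v21 : Fin d → ℝ) (v22 : ℝ)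
    (M V : Matrix (Fin (d + 1)) (Fin (d + 1)) ℝ)
    (hM11 : ∀ a b : Fin d, M a.castSucc b.castSucc = M11 a b)
    (hm21 : ∀ b : Fin d, M (Fin.last d) b.castSucc = m21 b)
    (hv21 : ∀ a : Fin d, V (Fin.last d) a.castSucc = v21 a)
    (hv22 : V (Fin.last d) (Fin.last d) = v22)
    (τ : ℝ) (hτ : 0 < τ)
    (Z : Matrix (Fin (d + 1)) (Fin l) ℝ)
    (hZ : ∀ (a : Fin (d + 1)) (i : Fin l),
      Z a i = if h : (a : ℕ) < d then x i ⟨a, h⟩ else y i)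
    (ones : Fin l → ℝ) (hones : ones = fun _ => 1)
    (E : Matrix (Fin (d + 1)) (Fin l) ℝ)
    (hE : E = Z + ((1 : ℝ) / l) • (V * Z *
      ((1 / τ) • (Zᵀ * M * Z) + vecMulVec ones ones
        - (1 / ((l : ℝ) * τ)) • vecMulVec ones (ones ᵥ* (Zᵀ * M * Z)))))
    (sx : Fin d → ℝ) (hsx : sx = fun a => (1 / (l : ℝ)) * ∑ i, x i a)
    (sy : ℝ) (hsy : sy = (1 / (l : ℝ)) * ∑ i, y i)
    (Cxx : Matrix (Fin d) (Fin d) ℝ)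
    (hCxx : Cxx = ((1 : ℝ) / l) • ∑ i, vecMulVec (x i) (x i) - vecMulVec sx sx)
    (Cxy : Fin d → ℝ)
    (hCxy : Cxy = (fun a => (1 / (l : ℝ)) * ∑ i, y i * x i a) - sy • sx)
    (Cyy : ℝ) (hCyy : Cyy = (1 / (l : ℝ)) * ∑ i, (y i) ^ 2 - sy ^ 2)
    (what : Fin d → ℝ)
    (hwhat : what = M11ᵀ.mulVec (Cxx.mulVec v21 + v22 • Cxy)
      + (v21 ⬝ᵥ Cxy + v22 * Cyy) • m21) :
    E (Fin.last d) lastCol = (1 / τ) * (what ⬝ᵥ x lastCol) + v21 ⬝ᵥ sx + v22 * sy := by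
  have hl0 : (l : ℝ) ≠ 0 := by
    have : 0 < l := hl
    exact_mod_cast this.ne'
  have hτ0 : τ ≠ 0 := ne_of_gt hτ
  have hZx : ∀ (a : Fin d) (i : Fin l), Z a.castSucc i = x i a := by
    intro a i
    rw [hZ, dif_pos (by simpa using a.isLt)]
    rfl
  have hZy : ∀ i : Fin l, Z (Fin.last d) i = y i := by
    intro i
    rw [hZ, dif_neg (by simp)]
  set P : Fin l → ℝ := fun i => v21 ⬝ᵥ x i + v22 * y i with hP
  set w : Fin l → Fin d → ℝ := fun i => M11ᵀ *ᵥ x i + y i • m21 with hw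
  have hVZ : ∀ i, (V * Z) (Fin.last d) i = P i := by
    intro i
    rw [Matrix.mul_apply, Fin.sum_univ_castSucc]
    simp only [hZx, hZy, hv21, hv22]
    rfl
  have hZMZ : ∀ i, (Zᵀ * M * Z) i lastCol = w i ⬝ᵥ x lastCol := by
    intro i
    rw [Matrix.mul_apply, Fin.sum_univ_castSucc, hZy lastCol, hy, mul_zero, add_zero]
    simp only [hw, dotProduct, Pi.add_apply, Pi.smul_apply, smul_eq_mul]
    refine Finset.sum_congr rfl fun a _ => ?_
    rw [hZx, Matrix.mul_apply, Fin.sum_univ_castSucc]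
    simp only [Matrix.transpose_apply, hZx, hZy, hM11, hm21]
    congr 2
    simp only [Matrix.mulVec, dotProduct, Matrix.transpose_apply]
    exact Finset.sum_congr rfl fun b _ => mul_comm _ _
  -- sum identities
  have hsumP : ∑ i, P i = v21 ⬝ᵥ (∑ i, x i) + v22 * (∑ i, y i) := by
    simp only [hP]
    rw [Finset.sum_add_distrib, myDotSum, Finset.mul_sum]
  have hsumPx : ∑ i, P i • x i
      = (∑ i, vecMulVec (x i) (x i)) *ᵥ v21 + v22 • (∑ i, y i • x i) := by
    simp only [hP]
    have e1 : ∀ i : Fin l, (v21 ⬝ᵥ x i + v22 * y i) • x i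
        = vecMulVec (x i) (x i) *ᵥ v21 + v22 • (y i • x i) := fun i => by
      rw [add_smul, ← smul_smul, myVecMulVecMulVec, dotProduct_comm v21 (x i)]
    rw [Finset.sum_congr rfl fun i _ => e1 i, Finset.sum_add_distrib, mySumMulVec,
      ← Finset.smul_sum]
  have hsumPy : ∑ i, P i * y i = v21 ⬝ᵥ (∑ i, y i • x i) + v22 * (∑ i, (y i)^2) := by
    simp only [hP]
    have e1 : ∀ i : Fin l, (v21 ⬝ᵥ x i + v22 * y i) * y i
        = v21 ⬝ᵥ (y i • x i) + v22 * (y i)^2 := fun i => by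
      rw [dotProduct_smul, smul_eq_mul]
      ring
    rw [Finset.sum_congr rfl fun i _ => e1 i, Finset.sum_add_distrib, myDotSum,
      Finset.mul_sum]
  have hsumw : ∑ i, w i = M11ᵀ *ᵥ (∑ i, x i) + (∑ i, y i) • m21 := by
    simp only [hw]
    rw [Finset.sum_add_distrib, myMulVecSum, ← Finset.sum_smul]
  have hsumPw : ∑ i, P i • w i
      = M11ᵀ *ᵥ ((∑ i, vecMulVec (x i) (x i)) *ᵥ v21 + v22 • (∑ i, y i • x i))
        + (v21 ⬝ᵥ (∑ i, y i • x i) + v22 * (∑ i, (y i)^2)) • m21 := by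
    rw [← hsumPx, ← hsumPy, ← myMulVecSum, Finset.sum_smul, ← Finset.sum_add_distrib]
    refine Finset.sum_congr rfl fun i _ => ?_
    simp only [hw]
    rw [smul_add, Matrix.mulVec_smul, smul_smul]
  -- expand the entry
  rw [hE]
  simp only [Matrix.add_apply, Matrix.smul_apply, smul_eq_mul, hZy lastCol, hy]
  rw [Matrix.mul_apply]
  have hA : ∀ i : Fin l, ((1 / τ) • (Zᵀ * M * Z) + vecMulVec ones ones
      - (1 / ((l:ℝ) * τ)) • vecMulVec ones (ones ᵥ* (Zᵀ * M * Z))) i lastCol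
      = 1/τ * (w i ⬝ᵥ x lastCol) + 1 - 1/((l:ℝ)*τ) * ∑ j, w j ⬝ᵥ x lastCol := by
    intro i
    simp only [Matrix.add_apply, Matrix.sub_apply, Matrix.smul_apply, vecMulVec_apply,
      smul_eq_mul, hZMZ, hones, one_mul, mul_one]
    congr 2
    simp only [Matrix.vecMul, dotProduct, one_mul, hZMZ]
  rw [Finset.sum_congr rfl fun i _ => by rw [hVZ, hA]]
  have hsplit : ∑ i, P i * (1/τ * (w i ⬝ᵥ x lastCol) + 1
        - 1/((l:ℝ)*τ) * ∑ j, w j ⬝ᵥ x lastCol)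
      = 1/τ * ((∑ i, P i • w i) ⬝ᵥ x lastCol) + (∑ i, P i)
        - 1/((l:ℝ)*τ) * ((∑ j, w j) ⬝ᵥ x lastCol) * (∑ i, P i) := by
    rw [← mySumDot, ← mySumDot]
    simp only [smul_dotProduct, smul_eq_mul]
    rw [Finset.sum_congr rfl fun i _ => show P i * (1/τ * (w i ⬝ᵥ x lastCol) + 1
        - 1/((l:ℝ)*τ) * ∑ j, w j ⬝ᵥ x lastCol)
        = 1/τ * (P i * (w i ⬝ᵥ x lastCol)) + P i
          - 1/((l:ℝ)*τ) * (∑ j, w j ⬝ᵥ x lastCol) * P i from by ring]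
    rw [Finset.sum_sub_distrib, Finset.sum_add_distrib, ← Finset.mul_sum, ← Finset.mul_sum]
  rw [hsplit, hsumPw, hsumw, hsumP]
  have hsx' : sx = (1/(l:ℝ)) • ∑ i, x i := by
    funext a
    simp [hsx, Finset.sum_apply]
  have hCxy' : Cxy = (1/(l:ℝ)) • (∑ i, y i • x i) - sy • sx := by
    funext a
    simp [hCxy, Finset.sum_apply, Finset.mul_sum]
  simp only [hwhat, hCxx, hCxy', hCyy, hsx', hsy,
    Matrix.mulVec_add, Matrix.mulVec_smul, Matrix.sub_mulVec, Matrix.smul_mulVec,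
    Matrix.mulVec_sub, myVecMulVecMulVec,
    add_dotProduct, sub_dotProduct, smul_dotProduct,
    dotProduct_add, dotProduct_sub, dotProduct_smul,
    smul_eq_mul, smul_smul]
  rw [dotProduct_comm (∑ i, x i) v21]
  field_simp
  ring
end

section
/- Let X̄ ∈ ℝ^{n×d} with X̄ᵀX̄ invertible, ȳ ∈ ℝ^n, σ > 0, μ_w ∈ ℝ^d, Σ_w ∈ ℝ^{d×d} symmetric positive definite, and l > 0. Define C_xx := X̄ᵀX̄/l and C_xy := X̄ᵀȳ/l, and set the parameters M₁₁ := (l/σ²)·(X̄ᵀX̄/σ² + Σ_w⁻¹)⁻¹, v₂₁ := (σ²/l)·(X̄ᵀX̄/l)⁻¹ Σ_w⁻¹ μ_w, v₂₂ := 1, m₂₁ := 0 (here X̄ᵀX̄/σ² + Σ_w⁻¹ is positive definite, hence invertible). Then, with temperature τ = 1, the attention estimator equals the Bayes-optimal ridge estimator: M₁₁ᵀ(C_xx v₂₁ + v₂₂ C_xy) + (v₂₁ᵀ C_xy + v₂₂ C_yy)·m₂₁ = (X̄ᵀX̄/σ² + Σ_w⁻¹)⁻¹ (X̄ᵀȳ/σ²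 + Σ_w⁻¹ μ_w) for every C_yy ∈ ℝ. -/
open Matrix

/-- With parameters `M₁₁ := (l/σ²)(X̄ᵀX̄/σ² + Σ_w⁻¹)⁻¹`,
`v₂₁ := (σ²/l)(X̄ᵀX̄/l)⁻¹ Σ_w⁻¹ μ_w`, `v₂₂ := 1`, `m₂₁ := 0`, the attention estimator
(at temperature `τ = 1`) equals the Bayes-optimal ridge estimator:
`M₁₁ᵀ(C_xx v₂₁ + v₂₂ C_xy) + (v₂₁ᵀ C_xy + v₂₂ C_yy)·m₂₁
  = (X̄ᵀX̄/σ² + Σ_w⁻¹)⁻¹ (X̄ᵀȳ/σ² + Σ_w⁻¹ μ_w)` for every `C_yy`. -/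
theorem pretrained_params_eq_bayes {n d : ℕ}
    (X : Matrix (Fin n) (Fin d) ℝ) (hX : IsUnit (Xᵀ * X))
    (y : Fin n → ℝ) (σ : ℝ) (hσ : 0 < σ)
    (μw : Fin d → ℝ) (Sw : Matrix (Fin d) (Fin d) ℝ) (hSw : Sw.PosDef)
    (l : ℝ) (hl : 0 < l)
    (Cxx : Matrix (Fin d) (Fin d) ℝ) (hCxx : Cxx = (1 / l) • (Xᵀ * X))
    (Cxy : Fin d → ℝ) (hCxy : Cxy = (1 / l) • Xᵀ.mulVec y)
    (M11 : Matrix (Fin d) (Fin d) ℝ)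
    (hM11 : M11 = (l / σ ^ 2) • ((1 / σ ^ 2) • (Xᵀ * X) + Sw⁻¹)⁻¹)
    (v21 : Fin d → ℝ)
    (hv21 : v21 = (σ ^ 2 / l) • ((1 / l) • (Xᵀ * X))⁻¹.mulVec (Sw⁻¹.mulVec μw))
    (v22 : ℝ) (hv22 : v22 = 1)
    (m21 : Fin d → ℝ) (hm21 : m21 = 0) :
    ∀ Cyy : ℝ,
      M11ᵀ.mulVec (Cxx.mulVec v21 + v22 • Cxy) + (v21 ⬝ᵥ Cxy + v22 * Cyy) • m21
        = (((1 / σ ^ 2) • (Xᵀ * X) + Sw⁻¹)⁻¹).mulVec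
            ((1 / σ ^ 2) • Xᵀ.mulVec y + Sw⁻¹.mulVec μw) := by
  intro Cyy
  have hσ2 : (σ : ℝ) ^ 2 ≠ 0 := by positivity
  have hl' : (l : ℝ) ≠ 0 := ne_of_gt hl
  set A : Matrix (Fin d) (Fin d) ℝ := (1 / σ ^ 2) • (Xᵀ * X) + Sw⁻¹ with hA
  set s : Fin d → ℝ := Sw⁻¹.mulVec μw with hs
  set B : Matrix (Fin d) (Fin d) ℝ := (1 / l) • (Xᵀ * X) with hB
  -- B is invertible
  have hdet : IsUnit ((Xᵀ * X).det) := (Matrix.isUnit_iff_isUnit_det _).1 hX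
  have hBdet : IsUnit B.det := by
    rw [hB, Matrix.det_smul]
    exact (isUnit_iff_ne_zero.2 (by positivity)).mul hdet
  have hBinv : B * B⁻¹ = 1 := Matrix.mul_nonsing_inv B hBdet
  -- Cxx.mulVec v21 = (σ²/l) • s
  have h1 : Cxx.mulVec v21 = (σ ^ 2 / l) • s := by
    rw [hCxx, hv21, Matrix.mulVec_smul, Matrix.mulVec_mulVec, hBinv, Matrix.one_mulVec]
  -- A is symmetric
  have hSwT : Swᵀ = Sw := by
    have := hSw.1
    simpa [Matrix.IsHermitian, Matrix.conjTranspose_eq_transpose_of_trivial] using this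
  have hAT : Aᵀ = A := by
    rw [hA, Matrix.transpose_add, Matrix.transpose_smul, Matrix.transpose_mul,
      Matrix.transpose_transpose, Matrix.transpose_nonsing_inv, hSwT]
  have hM11T : M11ᵀ = (l / σ ^ 2) • A⁻¹ := by
    rw [hM11, Matrix.transpose_smul, Matrix.transpose_nonsing_inv, hAT]
  rw [hM11T, hm21, hv22, h1, hCxy, smul_zero, add_zero, one_smul,
    Matrix.smul_mulVec, Matrix.mulVec_add, smul_add,
    Matrix.mulVec_smul, Matrix.mulVec_smul, smul_smul, smul_smul]
  rw [div_mul_div_comm, div_mul_div_comm]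
  rw [show l * σ ^ 2 / (σ ^ 2 * l) = 1 from by rw [mul_comm]; exact div_self (by positivity),
    show l * 1 / (σ ^ 2 * l) = 1 / σ ^ 2 from by (field_simp)]
  rw [Matrix.mulVec_add, one_smul, Matrix.mulVec_smul, add_comm]
end
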